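/- Let ζ ∈ ℂ be a primitive 5th root of unity and define Q : ℤ × ℤ → ℂ by Q(m,n) = (−1)^(m² + n²) · ζ^(3m² + 3mn). Then for S = {(1,0), (4,1), (3,1), (5,2), (2,1), (3,2), (1,1), (0,1)}, every Q(α) with α ∈ S is a root of unity, and the product over α ∈ S of the multiplicative order of Q(α) equals 2⁶·5⁴ = 40000. -/

import Mathlib

theorem stmt_9 (ζ : ℂ) (hζ : IsPrimitiveRoot ζ 5)
    (Q : ℤ × ℤ → ℂ) (hQ : ∀ m n : ℤ, Q (m, n) = (-1 : ℂ) ^ (m^2 + n^2) * ζ ^ (3*m^2 + 3*m*n))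
    (S : Finset (ℤ × ℤ)) (hS : S = {(1,0), (4,1), (3,1), (5,2), (2,1), (3,2), (1,1), (0,1)}) :
    (∀ α ∈ S, IsOfFinOrder (Q α)) ∧ ∏ α ∈ S, orderOf (Q α) = 2^6 * 5^4 := by
  have hz5 : ζ ^ (5:ℕ) = 1 := hζ.pow_eq_one
  have hz5i : ζ ^ (5:ℤ) = 1 := by exact_mod_cast (zpow_natCast ζ 5).trans hz5
  have hzr : ∀ k r : ℤ, k = 5 * r → ζ ^ k = 1 := by
    intro k r h
    rw [h, zpow_mul, hz5i, one_zpow]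
  have hzne : ζ ≠ 0 := hζ.ne_zero (by norm_num)
  -- values
  have e1 : Q (1,0) = -ζ^3 := by
    rw [hQ]; norm_num
  have e2 : Q (4,1) = -1 := by
    rw [hQ]; norm_num
    rw [show (60:ℕ) = 5*12 by norm_num, pow_mul, hz5, one_pow]
  have e3 : Q (3,1) = ζ := by
    rw [hQ]; norm_num
    rw [show (36:ℕ) = 5*7+1 by norm_num, pow_add, pow_mul, hz5, one_pow, one_mul, pow_one]
  have e4 : Q (5,2) = -1 := by
    rw [hQ]; norm_num
    rw [show (105:ℕ) = 5*21 by norm_num, pow_mul, hz5, one_pow]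
  have e5 : Q (2,1) = -ζ^3 := by
    rw [hQ]; norm_num
    rw [show (18:ℕ) = 5*3+3 by norm_num, pow_add, pow_mul, hz5, one_pow, one_mul]
  have e6 : Q (3,2) = -1 := by
    rw [hQ]; norm_num
    rw [show (45:ℕ) = 5*9 by norm_num, pow_mul, hz5, one_pow]
  have e7 : Q (1,1) = ζ := by
    rw [hQ]; norm_num
    rw [show (6:ℕ) = 5+1 by norm_num, pow_add, hz5, one_mul, pow_one]
  have e8 : Q (0,1) = -1 := by
    rw [hQ]; norm_num
  -- orders
  have h2 : orderOf (-1 : ℂ) = 2 := by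
    apply orderOf_eq_prime
    · norm_num
    · norm_num
  have h5 : orderOf ζ = 5 := hζ.eq_orderOf.symm
  have h53 : orderOf (ζ^3) = 5 := by
    exact ((hζ.pow_of_coprime 3 (by norm_num)).eq_orderOf).symm
  have h10 : orderOf (-ζ^3) = 10 := by
    rw [show -ζ^3 = (-1) * ζ^3 by ring]
    rw [(Commute.all (-1 : ℂ) (ζ^3)).orderOf_mul_eq_mul_orderOf_of_coprime
      (by rw [h2, h53]; norm_num), h2, h53]
  subst hS
  constructor
  · intro α hα
    rw [← orderOf_pos_iff]
    fin_cases hα <;>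
      simp only [e1, e2, e3, e4, e5, e6, e7, e8, h2, h5, h10] <;> norm_num
  · rw [Finset.prod_insert (by decide), Finset.prod_insert (by decide),
      Finset.prod_insert (by decide), Finset.prod_insert (by decide),
      Finset.prod_insert (by decide), Finset.prod_insert (by decide),
      Finset.prod_insert (by decide), Finset.prod_singleton,
      e1, e2, e3, e4, e5, e6, e7, e8, h2, h5, h10]
    norm_num
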